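/- For a compact metric space X, the set CPE(X) of continuous self-maps with completely positive entropy is a coanalytic (Π¹₁) subset of C(X,X) with the uniform topology. -/

import Mathlib

open MeasureTheory

/-- The topological entropy of a map, via `Dynamics.coverEntropy`. -/
noncomputable def topEntropy {X : Type*} [UniformSpace X] (T : X → X) : EReal :=
  Dynamics.coverEntropy T Set.univ

/-- `(X,T)` has completely positive entropy: every nontrivial topological factor has positive
topological entropy. -/
def HasCPEfactor {X : Type} [MetricSpace X] [CompactSpace X] (T : X → X) : Prop :=
  ∀ (Y : Type) [MetricSpace Y] [CompactSpace Y],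
    ∀ (S : Y → Y) (φ : X → Y), Continuous S → Continuous φ → Function.Surjective φ →
      φ ∘ T = S ∘ φ → (∃ y₁ y₂ : Y, y₁ ≠ y₂) → 0 < topEntropy S

namespace CPE13

open Dynamics Set Function Filter ENNReal EReal UniformSpace Uniformity

variable {X : Type} [MetricSpace X] [CompactSpace X]

/-- `ρ` is a (continuous) pseudometric. -/
def IsPM (ρ : C(X × X, ℝ)) : Prop :=
  (∀ x : X, ρ (x, x) = 0) ∧ (∀ x y : X, ρ (x, y) = ρ (y, x)) ∧
    (∀ x y z : X, ρ (x, z) ≤ ρ (x, y) + ρ (y, z))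

lemma IsPM.nonneg {ρ : C(X × X, ℝ)} (h : IsPM ρ) (x y : X) : 0 ≤ ρ (x, y) := by
  have h1 := h.1 x
  have h2 := h.2.1 x y
  have h3 := h.2.2 x y x
  linarith

/-- `ρ` is nondegenerate. -/
def Nondeg (ρ : C(X × X, ℝ)) : Prop := ∃ k : ℕ, ∃ x y : X, 1 / ((k : ℝ) + 1) ≤ ρ (x, y)

/-- `ρ`-uniform continuity condition making `T` descend to the metric quotient. -/
def Compat (T : C(X, X)) (ρ : C(X × X, ℝ)) : Prop :=
  ∀ m : ℕ, ∃ k : ℕ, ∀ x y : X,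
    ρ (x, y) < 1 / ((k : ℝ) + 1) → ρ (T x, T y) ≤ 1 / ((m : ℝ) + 1)

/-- Cardinality threshold. -/
noncomputable def Kb (n a : ℕ) : ℕ := ⌈Real.exp ((n : ℝ) / ((a : ℝ) + 1))⌉₊

/-- Existence of a small dynamical cover. -/
def Smallcov (T : C(X, X)) (ρ : C(X × X, ℝ)) (k n : ℕ) (ε : ℝ) : Prop :=
  ∃ c : Fin k → X, ∀ x : X, ∃ j : Fin k, ∀ i < n, ρ ((⇑T)^[i] x, (⇑T)^[i] (c j)) ≤ ε

/-- Subexponential growth of dynamical covers for the pseudometric `ρ`. -/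
def EntCond (T : C(X, X)) (ρ : C(X × X, ℝ)) : Prop :=
  ∀ m a : ℕ, ∃ N : ℕ, ∀ n ≥ N, Smallcov T ρ (Kb n a) n (1 / ((m : ℝ) + 1))

/-- Instance-free wrapper around a quotient, so that we can install our own metric. -/
def Wrap {X : Type} (sd : Setoid X) : Type := Quotient sd

variable (X) in
/-- The witness set. -/
def Bset : Set (C(X, X) × C(X × X, ℝ)) :=
  {p | IsPM p.2 ∧ Nondeg p.2 ∧ Compat p.1 p.2 ∧ EntCond p.1 p.2}

/-! ### Continuity helpers -/

lemma cont_eval_pair {W : Type*} [TopologicalSpace W] (g : W → C(X × X, ℝ))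
    (q : W → X × X) (hg : Continuous g) (hq : Continuous q) :
    Continuous fun w => g w (q w) :=
  continuous_eval.comp (hg.prodMk hq)

lemma cont_evalT {W : Type*} [TopologicalSpace W] (g : W → C(X, X)) (q : W → X)
    (hg : Continuous g) (hq : Continuous q) : Continuous fun w => g w (q w) :=
  continuous_eval.comp (hg.prodMk hq)

lemma cont_iter {W : Type*} [TopologicalSpace W] (g : W → C(X, X)) (q : W → X)
    (hg : Continuous g) (hq : Continuous q) (i : ℕ) :
    Continuous fun w => (⇑(g w))^[i] (q w) := by
  induction i with
  | zero => simpa using hq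
  | succ i ih =>
      have : (fun w => (⇑(g w))^[i + 1] (q w)) = fun w => g w ((⇑(g w))^[i] (q w)) := by
        funext w
        exact Function.iterate_succ_apply' _ _ _
      rw [this]
      exact cont_evalT g _ hg ih

/-! ### Closedness of pieces -/

lemma isClosed_isPM : IsClosed {p : C(X, X) × C(X × X, ℝ) | IsPM p.2} := by
  have h1 : IsClosed {p : C(X, X) × C(X × X, ℝ) | ∀ x : X, p.2 (x, x) = 0} := by
    rw [setOf_forall]
    exact isClosed_iInter fun x => isClosed_eq
      (cont_eval_pair Prod.snd (fun _ => (x, x)) continuous_snd continuous_const)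
      continuous_const
  have h2 : IsClosed {p : C(X, X) × C(X × X, ℝ) | ∀ x y : X, p.2 (x, y) = p.2 (y, x)} := by
    rw [setOf_forall]
    refine isClosed_iInter fun x => ?_
    rw [setOf_forall]
    exact isClosed_iInter fun y => isClosed_eq
      (cont_eval_pair Prod.snd (fun _ => (x, y)) continuous_snd continuous_const)
      (cont_eval_pair Prod.snd (fun _ => (y, x)) continuous_snd continuous_const)
  have h3 : IsClosed {p : C(X, X) × C(X × X, ℝ) |
      ∀ x y z : X, p.2 (x, z) ≤ p.2 (x, y) + p.2 (y, z)} := by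
    rw [setOf_forall]
    refine isClosed_iInter fun x => ?_
    rw [setOf_forall]
    refine isClosed_iInter fun y => ?_
    rw [setOf_forall]
    refine isClosed_iInter fun z => ?_
    exact isClosed_le
      (cont_eval_pair Prod.snd (fun _ => (x, z)) continuous_snd continuous_const)
      ((cont_eval_pair Prod.snd (fun _ => (x, y)) continuous_snd continuous_const).add
        (cont_eval_pair Prod.snd (fun _ => (y, z)) continuous_snd continuous_const))
  have : {p : C(X, X) × C(X × X, ℝ) | IsPM p.2} =
      {p | ∀ x : X, p.2 (x, x) = 0} ∩ ({p | ∀ x y : X, p.2 (x, y) = p.2 (y, x)} ∩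
        {p | ∀ x y z : X, p.2 (x, z) ≤ p.2 (x, y) + p.2 (y, z)}) := by
    ext p; simp [IsPM, mem_setOf_eq, mem_inter_iff]
  rw [this]
  exact h1.inter (h2.inter h3)

lemma isClosed_compat_mk (m k : ℕ) :
    IsClosed {p : C(X, X) × C(X × X, ℝ) | ∀ x y : X,
      p.2 (x, y) < 1 / ((k : ℝ) + 1) → p.2 (p.1 x, p.1 y) ≤ 1 / ((m : ℝ) + 1)} := by
  rw [setOf_forall]
  refine isClosed_iInter fun x => ?_
  rw [setOf_forall]
  refine isClosed_iInter fun y => ?_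
  have : {p : C(X, X) × C(X × X, ℝ) |
      p.2 (x, y) < 1 / ((k : ℝ) + 1) → p.2 (p.1 x, p.1 y) ≤ 1 / ((m : ℝ) + 1)} =
      {p : C(X, X) × C(X × X, ℝ) | 1 / ((k : ℝ) + 1) ≤ p.2 (x, y)} ∪
        {p : C(X, X) × C(X × X, ℝ) | p.2 (p.1 x, p.1 y) ≤ 1 / ((m : ℝ) + 1)} := by
    ext p
    simp only [mem_setOf_eq, mem_union]
    constructor
    · intro h
      rcases le_or_gt (1 / ((k : ℝ) + 1)) (p.2 (x, y)) with h' | h'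
      · exact Or.inl h'
      · exact Or.inr (h h')
    · rintro (h | h) hlt
      · exact absurd hlt (not_lt.2 h)
      · exact h
  rw [this]
  have hc : Continuous fun p : C(X, X) × C(X × X, ℝ) => p.2 (p.1 x, p.1 y) :=
    cont_eval_pair Prod.snd (fun p : C(X, X) × C(X × X, ℝ) => (p.1 x, p.1 y)) continuous_snd
      ((cont_evalT Prod.fst (fun _ => x) continuous_fst continuous_const).prodMk
        (cont_evalT Prod.fst (fun _ => y) continuous_fst continuous_const))
  exact IsClosed.union
    (isClosed_le continuous_const
      (cont_eval_pair Prod.snd (fun _ => (x, y)) continuous_snd continuous_const))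
    (isClosed_le hc continuous_const)

lemma isClosed_nondeg_k (k : ℕ) :
    IsClosed {p : C(X, X) × C(X × X, ℝ) | ∃ x y : X, 1 / ((k : ℝ) + 1) ≤ p.2 (x, y)} := by
  have : {p : C(X, X) × C(X × X, ℝ) | ∃ x y : X, 1 / ((k : ℝ) + 1) ≤ p.2 (x, y)} =
      Prod.fst '' {q : (C(X, X) × C(X × X, ℝ)) × (X × X) | 1 / ((k : ℝ) + 1) ≤ q.1.2 q.2} := by
    ext p
    constructor
    · rintro ⟨x, y, h⟩; exact ⟨(p, (x, y)), h, rfl⟩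
    · rintro ⟨q, hq, rfl⟩; exact ⟨q.2.1, q.2.2, hq⟩
  rw [this]
  exact isClosedMap_fst_of_compactSpace _
    (isClosed_le continuous_const (cont_eval_pair (fun q : (C(X, X) × C(X × X, ℝ)) × (X × X) => q.1.2) Prod.snd
      (continuous_snd.comp continuous_fst) continuous_snd))

lemma isClosed_smallcov (k n : ℕ) (ε : ℝ) :
    IsClosed {p : C(X, X) × C(X × X, ℝ) | Smallcov p.1 p.2 k n ε} := by
  have : {p : C(X, X) × C(X × X, ℝ) | Smallcov p.1 p.2 k n ε} =
      Prod.fst '' {q : (C(X, X) × C(X × X, ℝ)) × (Fin k → X) | ∀ x : X, ∃ j : Fin k,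
        ∀ i < n, q.1.2 ((⇑q.1.1)^[i] x, (⇑q.1.1)^[i] (q.2 j)) ≤ ε} := by
    ext p
    constructor
    · rintro ⟨c, hc⟩; exact ⟨(p, c), hc, rfl⟩
    · rintro ⟨q, hq, rfl⟩; exact ⟨q.2, hq⟩
  rw [this]
  refine isClosedMap_fst_of_compactSpace _ ?_
  rw [setOf_forall]
  refine isClosed_iInter fun x => ?_
  have : {q : (C(X, X) × C(X × X, ℝ)) × (Fin k → X) | ∃ j : Fin k,
      ∀ i < n, q.1.2 ((⇑q.1.1)^[i] x, (⇑q.1.1)^[i] (q.2 j)) ≤ ε} =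
      ⋃ j : Fin k, ⋂ i : ℕ, ⋂ _ : i < n,
        {q : (C(X, X) × C(X × X, ℝ)) × (Fin k → X) |
          q.1.2 ((⇑q.1.1)^[i] x, (⇑q.1.1)^[i] (q.2 j)) ≤ ε} := by
    ext q
    simp only [mem_setOf_eq, mem_iUnion, mem_iInter]
  rw [this]
  refine isClosed_iUnion_of_finite fun j => ?_
  refine isClosed_iInter fun i => ?_
  refine isClosed_iInter fun _ => ?_
  refine isClosed_le (cont_eval_pair
    (fun q : (C(X, X) × C(X × X, ℝ)) × (Fin k → X) => q.1.2) _
    (continuous_snd.comp continuous_fst) ?_) continuous_const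
  exact (cont_iter (fun q : (C(X, X) × C(X × X, ℝ)) × (Fin k → X) => q.1.1) (fun _ => x)
      (continuous_fst.comp continuous_fst) continuous_const i).prodMk
    (cont_iter (fun q : (C(X, X) × C(X × X, ℝ)) × (Fin k → X) => q.1.1) (fun q => q.2 j)
      (continuous_fst.comp continuous_fst) ((continuous_apply j).comp continuous_snd) i)

lemma analyticSet_inter {α : Type*} [TopologicalSpace α] [T2Space α] {s t : Set α}
    (hs : AnalyticSet s) (ht : AnalyticSet t) : AnalyticSet (s ∩ t) := by
  have h : s ∩ t = ⋂ b : Bool, (bif b then s else t) := by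
    ext x
    simp only [mem_inter_iff, mem_iInter, Bool.forall_bool, cond_false, cond_true, and_comm]
  rw [h]
  exact AnalyticSet.iInter fun b => by cases b <;> simpa

variable (X) in
lemma analyticSet_Bset : AnalyticSet (Bset X) := by
  have hpolish : PolishSpace (C(X, X) × C(X × X, ℝ)) := inferInstance
  have hIsPM : AnalyticSet {p : C(X, X) × C(X × X, ℝ) | IsPM p.2} :=
    isClosed_isPM.analyticSet
  have hNd : AnalyticSet {p : C(X, X) × C(X × X, ℝ) | Nondeg p.2} := by
    have : {p : C(X, X) × C(X × X, ℝ) | Nondeg p.2} =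
        ⋃ k : ℕ, {p : C(X, X) × C(X × X, ℝ) | ∃ x y : X, 1 / ((k : ℝ) + 1) ≤ p.2 (x, y)} := by
      ext p; simp [Nondeg]
    rw [this]
    exact AnalyticSet.iUnion fun k => (isClosed_nondeg_k k).analyticSet
  have hCp : AnalyticSet {p : C(X, X) × C(X × X, ℝ) | Compat p.1 p.2} := by
    have : {p : C(X, X) × C(X × X, ℝ) | Compat p.1 p.2} =
        ⋂ m : ℕ, ⋃ k : ℕ, {p : C(X, X) × C(X × X, ℝ) | ∀ x y : X,
          p.2 (x, y) < 1 / ((k : ℝ) + 1) → p.2 (p.1 x, p.1 y) ≤ 1 / ((m : ℝ) + 1)} := by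
      ext p; simp [Compat, mem_iInter, mem_iUnion]
    rw [this]
    exact AnalyticSet.iInter fun m =>
      AnalyticSet.iUnion fun k => (isClosed_compat_mk m k).analyticSet
  have hEc : AnalyticSet {p : C(X, X) × C(X × X, ℝ) | EntCond p.1 p.2} := by
    have : {p : C(X, X) × C(X × X, ℝ) | EntCond p.1 p.2} =
        ⋂ m : ℕ, ⋂ a : ℕ, ⋃ N : ℕ, ⋂ j : ℕ,
          {p : C(X, X) × C(X × X, ℝ) |
            Smallcov p.1 p.2 (Kb (N + j) a) (N + j) (1 / ((m : ℝ) + 1))} := by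
      ext p
      simp only [EntCond, mem_setOf_eq, mem_iInter, mem_iUnion]
      constructor
      · intro h m a
        obtain ⟨N, hN⟩ := h m a
        exact ⟨N, fun j => hN (N + j) (Nat.le_add_right _ _)⟩
      · intro h m a
        obtain ⟨N, hN⟩ := h m a
        refine ⟨N, fun n hn => ?_⟩
        have := hN (n - N)
        rwa [Nat.add_sub_cancel' hn] at this
    rw [this]
    exact AnalyticSet.iInter fun m => AnalyticSet.iInter fun a =>
      AnalyticSet.iUnion fun N => AnalyticSet.iInter fun j =>
        (isClosed_smallcov _ _ _).analyticSet
  have : Bset X = {p : C(X, X) × C(X × X, ℝ) | IsPM p.2} ∩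
      ({p : C(X, X) × C(X × X, ℝ) | Nondeg p.2} ∩
        ({p : C(X, X) × C(X × X, ℝ) | Compat p.1 p.2} ∩
          {p : C(X, X) × C(X × X, ℝ) | EntCond p.1 p.2})) := by
    ext p; simp [Bset, mem_setOf_eq, mem_inter_iff, and_assoc]
  rw [this]
  exact analyticSet_inter hIsPM (analyticSet_inter hNd (analyticSet_inter hCp hEc))

/-! ### Entropy estimates -/

lemma le_zero_of_forall_le {x : EReal}
    (h : ∀ a : ℕ, x ≤ ((2 / ((a : ℝ) + 1) : ℝ) : EReal)) : x ≤ 0 := by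
  by_contra hx
  rw [not_le] at hx
  obtain ⟨r, hr0, hrx⟩ := EReal.lt_iff_exists_real_btwn.1 hx
  have hr0' : (0 : ℝ) < r := by exact_mod_cast hr0
  obtain ⟨a, ha⟩ := exists_nat_one_div_lt (half_pos hr0')
  have h2 : (2 : ℝ) / ((a : ℝ) + 1) < r := by
    rw [div_lt_iff₀ (by positivity)] at ha ⊢
    linarith
  exact absurd ((h a).trans_lt (by exact_mod_cast h2)) (not_lt.2 hrx.le)

lemma entropy_le_zero (T : C(X, X)) (ρ : C(X × X, ℝ)) (hpm : IsPM ρ) (hec : EntCond T ρ)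
    (u : UniformSpace X)
    (hb : (@uniformity X u).HasBasis (fun ε : ℝ => 0 < ε) fun ε => {p : X × X | ρ p < ε}) :
    @coverEntropy X u ⇑T Set.univ ≤ 0 := by
  classical
  rw [@coverEntropy_eq_iSup_basis X u ℝ _ _ hb ⇑T Set.univ]
  refine iSup₂_le fun ε hε => ?_
  obtain ⟨m, hm⟩ := exists_nat_one_div_lt (half_pos hε)
  have hm2 : 2 / ((m : ℝ) + 1) < ε := by
    rw [div_lt_iff₀ (by positivity)] at hm ⊢
    linarith
  set U' : Set (X × X) := {p | ρ p ≤ 1 / ((m : ℝ) + 1)} with hU'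
  haveI hsym : SetRel.IsSymm U' := ⟨fun x y h => by
    simp only [U', mem_setOf_eq] at h ⊢
    rw [show ρ (y, x) = ρ (x, y) from hpm.2.1 y x]
    exact h⟩
  have hcomp : SetRel.comp U' U' ⊆ {p : X × X | ρ p < ε} := by
    rintro ⟨x, z⟩ ⟨y, h1, h2⟩
    simp only [U', mem_setOf_eq] at h1 h2 ⊢
    have h3 := hpm.2.2 x y z
    linarith
  refine le_trans (coverEntropyEntourage_antitone ⇑T Set.univ hcomp) ?_
  refine le_zero_of_forall_le fun a => ?_
  obtain ⟨N, hN⟩ := hec m a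
  set n := max N (a + 1) with hn
  have hnN : N ≤ n := le_max_left _ _
  have hna : a + 1 ≤ n := le_max_right _ _
  have hnpos : 0 < n := lt_of_lt_of_le (Nat.succ_pos a) hna
  obtain ⟨c, hc⟩ := hN n hnN
  set s : Finset X := Finset.image c Finset.univ with hs
  have hcover : IsDynCoverOf ⇑T Set.univ U' n ↑s := by
    intro x _
    obtain ⟨j, hj⟩ := hc x
    refine ⟨c j, by simp [s], ?_⟩
    rw [mem_dynEntourage]
    intro i hi
    show ((⇑T)^[i] x, (⇑T)^[i] (c j)) ∈ U'
    simp only [U', mem_setOf_eq]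
    exact hj i hi
  have hcard : s.card ≤ Kb n a := le_trans Finset.card_image_le (by simp)
  have hkey := IsDynCoverOf.coverEntropyEntourage_le_log_card_div
    (Set.mapsTo_univ ⇑T Set.univ) hnpos.ne' hcover
  refine hkey.trans ?_
  have hn0 : (0 : EReal) < (n : ℕ) := by exact_mod_cast hnpos
  rw [EReal.div_le_iff_le_mul hn0 (EReal.natCast_ne_top n)]
  set t : ℝ := (n : ℝ) * (2 / ((a : ℝ) + 1)) with ht
  have hrhs : ((n : ℕ) : EReal) * ((2 / ((a : ℝ) + 1) : ℝ) : EReal) = (t : EReal) := by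
    rw [← EReal.coe_coe_eq_natCast, ← EReal.coe_mul]
  rw [hrhs]
  -- real estimate : (s.card : ℝ) ≤ Real.exp t
  have hreal : (s.card : ℝ) ≤ Real.exp t := by
    have h1 : (s.card : ℝ) ≤ (Kb n a : ℝ) := by exact_mod_cast hcard
    have h2 : (Kb n a : ℝ) ≤ Real.exp ((n : ℝ) / ((a : ℝ) + 1)) + 1 :=
      (Nat.ceil_lt_add_one (Real.exp_pos _).le).le
    have h3 : (1 : ℝ) ≤ Real.exp ((n : ℝ) / ((a : ℝ) + 1)) :=
      Real.one_le_exp (by positivity)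
    have h4 : (2 : ℝ) ≤ Real.exp ((n : ℝ) / ((a : ℝ) + 1)) := by
      have : (1 : ℝ) ≤ (n : ℝ) / ((a : ℝ) + 1) := by
        rw [le_div_iff₀ (by positivity)]
        have : (a : ℝ) + 1 ≤ (n : ℝ) := by exact_mod_cast hna
        linarith
      have := Real.add_one_le_exp ((n : ℝ) / ((a : ℝ) + 1))
      linarith
    have h5 : Real.exp ((n : ℝ) / ((a : ℝ) + 1)) + 1 ≤
        Real.exp ((n : ℝ) / ((a : ℝ) + 1)) * Real.exp ((n : ℝ) / ((a : ℝ) + 1)) := by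
      nlinarith
    have h6 : Real.exp ((n : ℝ) / ((a : ℝ) + 1)) * Real.exp ((n : ℝ) / ((a : ℝ) + 1)) =
        Real.exp t := by
      rw [← Real.exp_add]
      congr 1
      rw [ht]; ring
    linarith
  calc ENNReal.log (s.card) ≤ ENNReal.log (ENNReal.ofReal (Real.exp t)) := by
        refine ENNReal.log_monotone ?_
        rw [← ENNReal.ofReal_natCast]
        exact ENNReal.ofReal_le_ofReal hreal
    _ = (t : EReal) := by rw [ENNReal.log_ofReal_of_pos (Real.exp_pos _), Real.log_exp]

lemma entCond_of_entropy (T : C(X, X)) (ρ : C(X × X, ℝ)) (hpm : IsPM ρ) [Nonempty X]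
    (u : UniformSpace X)
    (hb : (@uniformity X u).HasBasis (fun ε : ℝ => 0 < ε) fun ε => {p : X × X | ρ p < ε})
    (hent : @coverEntropy X u ⇑T Set.univ ≤ 0) : EntCond T ρ := by
  classical
  intro m a
  set Um : Set (X × X) := {p | ρ p < 1 / ((m : ℝ) + 1)} with hUm
  have hmem : Um ∈ @uniformity X u := hb.mem_of_mem (by positivity)
  have hU : coverEntropyEntourage ⇑T Set.univ Um ≤ 0 :=
    (@coverEntropyEntourage_le_coverEntropy X Um u ⇑T Set.univ hmem).trans hent
  set b : ℝ := 1 / ((a : ℝ) + 1) with hbdef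
  have hb0 : (0 : ℝ) < b := by positivity
  have hub : atTop.limsup
      (fun n : ℕ => ENNReal.log (coverMincard ⇑T Set.univ Um n) / n) < (b : EReal) :=
    lt_of_le_of_lt hU (by exact_mod_cast hb0)
  obtain ⟨N₀, hN₀⟩ := Filter.eventually_atTop.1 (Filter.eventually_lt_of_limsup_lt hub)
  refine ⟨max N₀ 1, fun n hn => ?_⟩
  have hnN : N₀ ≤ n := le_trans (le_max_left _ _) hn
  have hn1 : 1 ≤ n := le_trans (le_max_right _ _) hn
  have hn0 : (0 : EReal) < (n : ℕ) := by exact_mod_cast hn1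
  have hlt := hN₀ n hnN
  -- lower bound on log (Kb n a)
  have hKb_log : (((n : ℝ) * b : ℝ) : EReal) ≤ ENNReal.log ((Kb n a : ℕ) : ℝ≥0∞) := by
    have h1 : Real.exp ((n : ℝ) * b) ≤ (Kb n a : ℝ) := by
      have h3 : (n : ℝ) * b = (n : ℝ) / ((a : ℝ) + 1) := by rw [hbdef]; ring
      rw [h3]
      unfold Kb
      exact Nat.le_ceil _
    calc (((n : ℝ) * b : ℝ) : EReal)
        = ENNReal.log (ENNReal.ofReal (Real.exp ((n : ℝ) * b))) := by
          rw [ENNReal.log_ofReal_of_pos (Real.exp_pos _), Real.log_exp]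
      _ ≤ ENNReal.log ((Kb n a : ℕ) : ℝ≥0∞) := by
          refine ENNReal.log_monotone ?_
          rw [← ENNReal.ofReal_natCast]
          exact ENNReal.ofReal_le_ofReal h1
  have hcovKb : coverMincard ⇑T Set.univ Um n ≤ ((Kb n a : ℕ) : ℕ∞) := by
    by_contra hgt
    rw [not_le] at hgt
    have h2 : ENNReal.log (((Kb n a : ℕ) : ℕ∞) : ℝ≥0∞) <
        ENNReal.log ((coverMincard ⇑T Set.univ Um n : ℕ∞) : ℝ≥0∞) :=
      ENNReal.log_lt_log_iff.2 (by exact_mod_cast hgt)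
    have h3 : (((n : ℝ) * b : ℝ) : EReal) ≤
        ENNReal.log ((coverMincard ⇑T Set.univ Um n : ℕ∞) : ℝ≥0∞) := by
      refine le_trans ?_ h2.le
      rwa [ENat.toENNReal_coe]
    have h4 : (b : EReal) ≤ ENNReal.log (coverMincard ⇑T Set.univ Um n) / (n : ℕ) := by
      rw [EReal.le_div_iff_mul_le hn0 (EReal.natCast_ne_top n)]
      rw [← EReal.coe_coe_eq_natCast, ← EReal.coe_mul]
      rw [show b * (n : ℝ) = (n : ℝ) * b from mul_comm _ _]
      exact h3
    exact absurd hlt (not_lt.2 h4)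
  have hfin : coverMincard ⇑T Set.univ Um n < ⊤ :=
    lt_of_le_of_lt hcovKb (by exact_mod_cast lt_top_iff_ne_top.2 (ENat.coe_ne_top _))
  obtain ⟨s, hsc, hcard⟩ := (coverMincard_finite_iff ⇑T Set.univ Um n).1 hfin
  have hcardle : s.card ≤ Kb n a := by
    have h5 : (s.card : ℕ∞) ≤ ((Kb n a : ℕ) : ℕ∞) := hcard ▸ hcovKb
    exact_mod_cast h5
  refine ⟨fun j => s.toList.getD j (Classical.arbitrary X), fun x => ?_⟩
  have hx := hsc (mem_univ x)
  obtain ⟨y, hy, hxy⟩ := hx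
  have hyl : y ∈ s.toList := Finset.mem_toList.2 hy
  have hidx : s.toList.idxOf y < s.toList.length := List.idxOf_lt_length_iff.2 hyl
  have hlen : s.toList.length = s.card := Finset.length_toList s
  refine ⟨⟨s.toList.idxOf y, lt_of_lt_of_le (hlen ▸ hidx) hcardle⟩, fun i hi => ?_⟩
  have hcj : s.toList.getD (s.toList.idxOf y) (Classical.arbitrary X) = y := by
    rw [List.getD_eq_getElem _ _ hidx]
    exact List.getElem_idxOf hidx
  simp only [hcj]
  rw [mem_dynEntourage] at hxy
  have h6 : ((⇑T)^[i] y, (⇑T)^[i] x) ∈ Um := by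
    have h6' : ρ ((⇑T)^[i] x, (⇑T)^[i] y) < 1 / ((m : ℝ) + 1) := hxy i hi
    show ρ ((⇑T)^[i] y, (⇑T)^[i] x) < 1 / ((m : ℝ) + 1)
    rw [hpm.2.1]
    exact h6'
  have h7 : ρ ((⇑T)^[i] y, (⇑T)^[i] x) < 1 / ((m : ℝ) + 1) := h6
  rw [show ρ ((⇑T)^[i] x, (⇑T)^[i] y) = ρ ((⇑T)^[i] y, (⇑T)^[i] x) from hpm.2.1 _ _]
  exact h7.le

lemma basis_comap {Y : Type*} [PseudoMetricSpace Y] (φ : X → Y) (ρ : C(X × X, ℝ))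
    (hd : ∀ x y : X, dist (φ x) (φ y) = ρ (x, y)) :
    (@uniformity X (UniformSpace.comap φ inferInstance)).HasBasis (fun ε : ℝ => 0 < ε)
      (fun ε => {p : X × X | ρ p < ε}) := by
  rw [uniformity_comap]
  refine ((Metric.uniformity_basis_dist (α := Y)).comap
    (fun p : X × X => (φ p.1, φ p.2))).congr (fun _ => Iff.rfl) ?_
  intro ε _
  ext p
  simp only [preimage_setOf_eq, mem_setOf_eq, hd p.1 p.2]

/-! ### The two directions -/

lemma not_cpe_of_mem (T : C(X, X)) (ρ : C(X × X, ℝ)) (h : (T, ρ) ∈ Bset X) :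
    ¬ HasCPEfactor ⇑T := by
  obtain ⟨hpm, hnd, hcompat, hec⟩ := h
  intro hcpe
  have hsymm : ∀ {x y : X}, ρ (x, y) = 0 → ρ (y, x) = 0 := by
    intro x y hxy
    rw [hpm.2.1 y x]
    exact hxy
  have htrans : ∀ {x y z : X}, ρ (x, y) = 0 → ρ (y, z) = 0 → ρ (x, z) = 0 := by
    intro x y z h1 h2
    have h3 := hpm.2.2 x y z
    have h4 := hpm.nonneg x z
    linarith
  have hresp : ∀ x y : X, ρ (x, y) = 0 → ρ (T x, T y) = 0 := by
    intro x y hxy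
    refine le_antisymm ?_ (hpm.nonneg _ _)
    by_contra hpos
    rw [not_le] at hpos
    obtain ⟨m, hm⟩ := exists_nat_one_div_lt hpos
    obtain ⟨k, hk⟩ := hcompat m
    have := hk x y (by rw [hxy]; positivity)
    linarith
  let sd : Setoid X := ⟨fun x y => ρ (x, y) = 0,
    ⟨fun x => hpm.1 x, fun {x y} hh => hsymm hh, fun {x y z} h1 h2 => htrans h1 h2⟩⟩
  let Y : Type := Wrap sd
  have hwd : ∀ (a₁ b₁ a₂ b₂ : X), sd.r a₁ a₂ → sd.r b₁ b₂ → ρ (a₁, b₁) = ρ (a₂, b₂) := by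
    intro a₁ b₁ a₂ b₂ h1 h2
    have t1 := hpm.2.2 a₁ a₂ b₁
    have t2 := hpm.2.2 a₂ b₂ b₁
    have t3 := hpm.2.2 a₂ a₁ b₂
    have t4 := hpm.2.2 a₁ b₁ b₂
    have s1 : ρ (a₂, a₁) = 0 := hsymm h1
    have s2 : ρ (b₂, b₁) = 0 := hsymm h2
    have s1' : ρ (a₁, a₂) = 0 := h1
    have s2' : ρ (b₁, b₂) = 0 := h2
    linarith
  letI mY : MetricSpace Y :=
    { dist := Quotient.lift₂ (fun x y => ρ (x, y)) hwd
      dist_self := fun y => Quotient.inductionOn y fun x => hpm.1 x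
      dist_comm := fun y₁ y₂ => Quotient.inductionOn₂ y₁ y₂ fun x₁ x₂ => hpm.2.1 x₁ x₂
      dist_triangle := fun y₁ y₂ y₃ =>
        Quotient.inductionOn₃ y₁ y₂ y₃ fun x₁ x₂ x₃ => hpm.2.2 x₁ x₂ x₃
      eq_of_dist_eq_zero := fun {y₁ y₂} =>
        Quotient.inductionOn₂ y₁ y₂ (fun x₁ x₂ h0 => Quotient.sound h0) }
  let φ : X → Y := fun x => (Quotient.mk sd x : Quotient sd)
  have hdist : ∀ x y : X, dist (φ x) (φ y) = ρ (x, y) := fun x y => rfl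
  have hφ : Continuous φ := by
    rw [continuous_iff_continuousAt]
    intro x
    rw [ContinuousAt, Metric.tendsto_nhds]
    intro ε hε
    have hopen : IsOpen {x' : X | ρ (x', x) < ε} :=
      isOpen_lt (ρ.continuous.comp (continuous_id.prodMk continuous_const)) continuous_const
    have hmem : x ∈ {x' : X | ρ (x', x) < ε} := by
      simp only [mem_setOf_eq, hpm.1 x]
      exact hε
    filter_upwards [hopen.mem_nhds hmem] with x' hx'
    rw [hdist]
    exact hx'
  have hsurj : Function.Surjective φ := fun y => Quotient.inductionOn y fun x => ⟨x, rfl⟩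
  haveI hcY : CompactSpace Y := ⟨by rw [← hsurj.range_eq]; exact isCompact_range hφ⟩
  let S : Y → Y := Quotient.map ⇑T (fun x y hh => hresp x y hh)
  have hSmk : ∀ x : X, S (φ x) = φ (T x) := fun x => rfl
  have hS : Continuous S := by
    refine UniformContinuous.continuous (Metric.uniformContinuous_iff.2 fun ε hε => ?_)
    obtain ⟨m, hm⟩ := exists_nat_one_div_lt hε
    obtain ⟨k, hk⟩ := hcompat m
    refine ⟨1 / ((k : ℝ) + 1), by positivity, ?_⟩
    intro y₁ y₂
    refine Quotient.inductionOn₂ y₁ y₂ fun x₁ x₂ hd => ?_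
    have h1 : ρ (x₁, x₂) < 1 / ((k : ℝ) + 1) := hd
    have h2 := hk x₁ x₂ h1
    show dist (φ (T x₁)) (φ (T x₂)) < ε
    rw [hdist]
    exact lt_of_le_of_lt h2 hm
  have hcomm : φ ∘ ⇑T = S ∘ φ := funext fun x => (hSmk x).symm
  have hnt : ∃ y₁ y₂ : Y, y₁ ≠ y₂ := by
    obtain ⟨k, x, y, hk⟩ := hnd
    refine ⟨φ x, φ y, fun he => ?_⟩
    have h0 : ρ (x, y) = 0 := Quotient.exact he
    have hpos : (0 : ℝ) < 1 / ((k : ℝ) + 1) := by positivity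
    rw [h0] at hk
    linarith
  have hpos := hcpe Y S φ hS hφ hsurj hcomm hnt
  have hle : topEntropy S ≤ 0 := by
    have hsemi : Function.Semiconj φ ⇑T S := fun x => (hSmk x).symm
    have himg : φ '' Set.univ = Set.univ := by rw [Set.image_univ, hsurj.range_eq]
    have heq := Dynamics.coverEntropy_image_of_comap (inferInstance : UniformSpace Y)
      hsemi Set.univ
    rw [himg] at heq
    show Dynamics.coverEntropy S Set.univ ≤ 0
    rw [heq]
    exact entropy_le_zero T ρ hpm hec _ (basis_comap φ ρ fun x y => hdist x y)
  exact absurd hpos (not_lt.2 hle)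

lemma mem_of_not_cpe (T : C(X, X)) (h : ¬ HasCPEfactor ⇑T) :
    ∃ ρ : C(X × X, ℝ), (T, ρ) ∈ Bset X := by
  simp only [HasCPEfactor] at h
  push_neg at h
  obtain ⟨Y, iM, iC, S, φ, hS, hφ, hsurj, hcomm, hnt, hent⟩ := h
  obtain ⟨y₁, y₂, hne⟩ := hnt
  haveI : Nonempty X := ⟨(hsurj y₁).choose⟩
  set ρ : C(X × X, ℝ) := ⟨fun p => dist (φ p.1) (φ p.2),
    (hφ.comp continuous_fst).dist (hφ.comp continuous_snd)⟩ with hρ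
  have hpm : IsPM ρ :=
    ⟨fun x => dist_self _, fun x y => dist_comm _ _, fun x y z => dist_triangle _ _ _⟩
  refine ⟨ρ, hpm, ?_, ?_, ?_⟩
  · -- Nondeg
    obtain ⟨x₁, hx₁⟩ := hsurj y₁
    obtain ⟨x₂, hx₂⟩ := hsurj y₂
    have hd : 0 < dist y₁ y₂ := dist_pos.2 hne
    obtain ⟨k, hk⟩ := exists_nat_one_div_lt hd
    refine ⟨k, x₁, x₂, ?_⟩
    show 1 / ((k : ℝ) + 1) ≤ dist (φ x₁) (φ x₂)
    rw [hx₁, hx₂]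
    exact hk.le
  · -- Compat
    intro m
    have hSu : UniformContinuous S := CompactSpace.uniformContinuous_of_continuous hS
    obtain ⟨δ, hδ, hd⟩ := Metric.uniformContinuous_iff.1 hSu (1 / ((m : ℝ) + 1)) (by positivity)
    obtain ⟨k, hk⟩ := exists_nat_one_div_lt hδ
    refine ⟨k, fun x y hxy => ?_⟩
    have h1 : dist (φ x) (φ y) < δ := lt_trans hxy hk
    have h2 := hd h1
    have h3 : φ (T x) = S (φ x) := congrFun hcomm x
    have h4 : φ (T y) = S (φ y) := congrFun hcomm y
    show dist (φ (T x)) (φ (T y)) ≤ 1 / ((m : ℝ) + 1)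
    rw [h3, h4]
    exact h2.le
  · -- EntCond
    have hsemi : Function.Semiconj φ ⇑T S := fun x => congrFun hcomm x
    have himg : φ '' Set.univ = Set.univ := by rw [Set.image_univ, hsurj.range_eq]
    have heq := Dynamics.coverEntropy_image_of_comap (inferInstance : UniformSpace Y)
      hsemi Set.univ
    rw [himg] at heq
    refine entCond_of_entropy T ρ hpm _ (basis_comap φ ρ fun x y => rfl) ?_
    rw [← heq]
    exact hent

end CPE13

/-- For a compact metric space `X`, the set `CPE(X)` of continuous self-maps with completely
positive entropy is a coanalytic (Π¹₁) subset of `C(X,X)` with the uniform topology. -/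
theorem stmt13 (X : Type) [MetricSpace X] [CompactSpace X] :
    AnalyticSet ({T : C(X, X) | HasCPEfactor ⇑T}ᶜ) := by
  have heq : {T : C(X, X) | HasCPEfactor ⇑T}ᶜ = Prod.fst '' CPE13.Bset X := by
    ext T
    simp only [Set.mem_compl_iff, Set.mem_setOf_eq, Set.mem_image]
    constructor
    · intro h
      obtain ⟨ρ, hρ⟩ := CPE13.mem_of_not_cpe T h
      exact ⟨(T, ρ), hρ, rfl⟩
    · rintro ⟨⟨T', ρ⟩, hm, rfl⟩
      exact CPE13.not_cpe_of_mem T' ρ hm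
  rw [heq]
  exact (CPE13.analyticSet_Bset X).image_of_continuous continuous_fst
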